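/- Let A be a nonempty closed class of decision tables over E_k on which the function S (depth-version separation complexity) is not bounded from above. Then for every n ∈ ω there exists a table T* ∈ A with exactly n columns such that the minimum depth of a deterministic decision tree for T* equals n; consequently F^W_{h,A}(n) = F^Θ_{h,A}(n) = n for all n. -/

import Mathlib

/- Decision tables over E_{k+2} = {0, ..., k+1}, following Ostonov & Moshkov,
"Deterministic and Strongly Nondeterministic Decision Trees for Decision Tables
from Closed Classes".  Columns are labeled with attributes (natural numbers),
rows are functions supported on the attribute set, decisions are Booleans. -/

namespace ClosedClasses

/-- A decision table with 0-1-decisions over `E_{k+2}`. Rows are pairwise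
different (they form a `Finset`) and vanish outside the attribute set. -/
structure Table (k : ℕ) where
  attrs : Finset ℕ
  rows : Finset (ℕ → Fin (k + 2))
  dec : (ℕ → Fin (k + 2)) → Bool
  supp : ∀ r ∈ rows, ∀ a ∉ attrs, r a = 0

namespace Table

variable {k : ℕ}

/-- Number of columns. -/
def W (T : Table k) : ℕ := T.attrs.card

/-- Number of rows. -/
def N (T : Table k) : ℕ := T.rows.card

/-- All rows carry the same decision. -/
def ConstDec (T : Table k) : Prop :=
  ∀ r ∈ T.rows, ∀ r' ∈ T.rows, T.dec r = T.dec r'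

/-- `D` separates the row `r` from all other rows of `T`. -/
def Separates (T : Table k) (D : Finset ℕ) (r : ℕ → Fin (k + 2)) : Prop :=
  D ⊆ T.attrs ∧ ∀ r' ∈ T.rows, r' ≠ r → ∃ a ∈ D, r a ≠ r' a

/-- `S(T, r)`: minimum cardinality of a separating set for row `r`. -/
noncomputable def Srow (T : Table k) (r : ℕ → Fin (k + 2)) : ℕ :=
  sInf {m | ∃ D : Finset ℕ, T.Separates D r ∧ D.card = m}

/-- `S(T)`: maximum over rows of `S(T, r)`. -/
noncomputable def S (T : Table k) : ℕ :=
  sSup {m | ∃ r ∈ T.rows, T.Srow r = m}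

/-- A test of `T`: a set of columns distinguishing rows with different decisions. -/
def IsTest (T : Table k) (D : Finset ℕ) : Prop :=
  D ⊆ T.attrs ∧
    ∀ r ∈ T.rows, ∀ r' ∈ T.rows, T.dec r ≠ T.dec r' → ∃ a ∈ D, r a ≠ r' a

/-- `Θ(T)`: minimum cardinality of a test of `T`. -/
noncomputable def theta (T : Table k) : ℕ :=
  sInf {m | ∃ D : Finset ℕ, T.IsTest D ∧ D.card = m}

end Table

/-- `(k+2)`-decision trees: leaves carry decisions, internal nodes query an
attribute and branch on its `k+2` possible values. -/
inductive DT (k : ℕ) where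
  | leaf : Bool → DT k
  | node : ℕ → (Fin (k + 2) → DT k) → DT k

namespace DT

variable {k : ℕ}

/-- Deterministic evaluation of a tree on a row. -/
def eval : DT k → (ℕ → Fin (k + 2)) → Bool
  | leaf b, _ => b
  | node a ch, r => eval (ch (r a)) r

/-- Depth: maximum number of queries along a complete path. -/
def depth : DT k → ℕ
  | leaf _ => 0
  | node _ ch => 1 + Finset.univ.sup fun i => (ch i).depth

/-- The set `P(Γ)` of attributes queried in the tree. -/
def attrSet : DT k → Finset ℕ
  | leaf _ => ∅
  | node a ch => insert a (Finset.univ.biUnion fun i => (ch i).attrSet)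

/-- `ψ`-cost: maximum over complete paths of `ψ` of the word of queried
attributes (the accumulator `w` holds attributes already queried). -/
def cost (ψ : List ℕ → ℕ) : DT k → List ℕ → ℕ
  | leaf _, w => ψ w
  | node a ch, w => Finset.univ.sup fun i => cost ψ (ch i) (a :: w)

end DT

/-- `Γ` is a deterministic decision tree for the table `T`. -/
def IsDT {k : ℕ} (T : Table k) (Γ : DT k) : Prop :=
  Γ.attrSet ⊆ T.attrs ∧ ∀ r ∈ T.rows, Γ.eval r = T.dec r

/-- `h^d(T)`: minimum depth of a deterministic decision tree for `T`. -/
noncomputable def hd {k : ℕ} (T : Table k) : ℕ :=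
  sInf {m | ∃ Γ : DT k, IsDT T Γ ∧ Γ.depth = m}

/-- `ψ^d(T)`: minimum `ψ`-complexity of a deterministic decision tree for `T`. -/
noncomputable def psid {k : ℕ} (ψ : List ℕ → ℕ) (T : Table k) : ℕ :=
  sInf {m | ∃ Γ : DT k, IsDT T Γ ∧ Γ.cost ψ [] = m}

/-- A row satisfies a rule (a conjunction of equations `attribute = value`). -/
def RuleSat {k : ℕ} (rule : List (ℕ × Fin (k + 2))) (r : ℕ → Fin (k + 2)) : Prop :=
  ∀ p ∈ rule, r p.1 = p.2

/-- A strongly nondeterministic decision tree for `T`, represented by the set of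
words of its complete paths (rules): every rule uses attributes of `T`, each
row with decision 1 satisfies some rule, and each rule is consistent only with
rows carrying decision 1. -/
def IsSNDT {k : ℕ} (T : Table k) (R : Finset (List (ℕ × Fin (k + 2)))) : Prop :=
  (∀ rule ∈ R, ∀ p ∈ rule, p.1 ∈ T.attrs) ∧
  (∀ r ∈ T.rows, T.dec r = true → ∃ rule ∈ R, RuleSat rule r) ∧
  (∀ rule ∈ R, ∀ r ∈ T.rows, RuleSat rule r → T.dec r = true)

/-- `ψ^s(T)`: minimum `ψ`-complexity of a strongly nondeterministic decision
tree for `T`. -/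
noncomputable def psis {k : ℕ} (ψ : List ℕ → ℕ) (T : Table k) : ℕ :=
  sInf {m | ∃ R, IsSNDT T R ∧ R.sup (fun rule => ψ (rule.map Prod.fst)) = m}

/-- `h^s(T)`: minimum depth of a strongly nondeterministic decision tree. -/
noncomputable def hs {k : ℕ} (T : Table k) : ℕ :=
  sInf {m | ∃ R, IsSNDT T R ∧ R.sup (fun rule => (rule.map Prod.fst).length) = m}

/-- A complexity measure on finite words over the alphabet `{f_i : i ∈ ω}`. -/
structure CMeasure where
  ψ : List ℕ → ℕ
  pos : ∀ w, ψ w = 0 ↔ w = []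
  perm : ∀ w w' : List ℕ, w.Perm w' → ψ w = ψ w'
  mono : ∀ w₁ w₂ : List ℕ, ψ w₁ ≤ ψ (w₁ ++ w₂)
  subadd : ∀ w₁ w₂ : List ℕ, ψ (w₁ ++ w₂) ≤ ψ w₁ + ψ w₂

/-- Bounded complexity measure: `ψ(α) ≥ |α|`. -/
def CMeasure.Bounded (ψ : CMeasure) : Prop := ∀ w : List ℕ, w.length ≤ ψ.ψ w

/-- Extension of a complexity measure to finite sets of attributes. -/
def CMeasure.setCost (ψ : CMeasure) (D : Finset ℕ) : ℕ := ψ.ψ (D.sort (· ≤ ·))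

namespace Table

variable {k : ℕ}

/-- `S_ψ(T, r)`: minimum `ψ`-complexity of a set separating `r` from the other rows. -/
noncomputable def Spsirow (ψ : CMeasure) (T : Table k) (r : ℕ → Fin (k + 2)) : ℕ :=
  sInf {m | ∃ D : Finset ℕ, T.Separates D r ∧ ψ.setCost D = m}

/-- `S_ψ(T)`: maximum over rows of `S_ψ(T, r)`. -/
noncomputable def Spsi (ψ : CMeasure) (T : Table k) : ℕ :=
  sSup {m | ∃ r ∈ T.rows, Spsirow ψ T r = m}

/-- `Θ_ψ(T)`: minimum `ψ`-complexity of a test of `T`. -/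
noncomputable def thetapsi (ψ : CMeasure) (T : Table k) : ℕ :=
  sInf {m | ∃ D : Finset ℕ, T.IsTest D ∧ ψ.setCost D = m}

/-- `W_ψ(T) = ψ(P(T))`. -/
def Wpsi (ψ : CMeasure) (T : Table k) : ℕ := ψ.setCost T.attrs

/-- `V_ψ(T) = max{ψ(f_i) : f_i ∈ P(T)}`. -/
noncomputable def Vpsi (ψ : CMeasure) (T : Table k) : ℕ :=
  sSup {m | ∃ a ∈ T.attrs, ψ.ψ [a] = m}

end Table

/-- Restriction of a row to a set of attributes. -/
def restrict {k : ℕ} (A : Finset ℕ) (r : ℕ → Fin (k + 2)) : ℕ → Fin (k + 2) :=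
  fun a => if a ∈ A then r a else 0

/-- `T'` belongs to the closure `[T]` of `T` under removal of columns and
changing of decisions: `T'` keeps a subset of the columns of `T`, its rows are
the restrictions of the rows of `T`, and its decisions are arbitrary. -/
def InClosure {k : ℕ} (T' T : Table k) : Prop :=
  T'.attrs ⊆ T.attrs ∧ (T'.rows : Set (ℕ → Fin (k + 2))) = restrict T'.attrs '' (T.rows : Set (ℕ → Fin (k + 2)))

/-- A nonempty class of decision tables closed under removal of columns and
changing of decisions. -/
def ClosedClass {k : ℕ} (A : Set (Table k)) : Prop :=
  A.Nonempty ∧ ∀ T ∈ A, ∀ T' : Table k, InClosure T' T → T' ∈ A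

/-- `Ŝ_ψ(T) = max{S_ψ(T') : T' ∈ [T]}`. -/
noncomputable def Shatpsi {k : ℕ} (ψ : CMeasure) (T : Table k) : ℕ :=
  sSup {m | ∃ T' : Table k, InClosure T' T ∧ T'.Spsi ψ = m}

/-- `Ŝ(T) = max{S(T') : T' ∈ [T]}`. -/
noncomputable def Shat {k : ℕ} (T : Table k) : ℕ :=
  sSup {m | ∃ T' : Table k, InClosure T' T ∧ T'.S = m}

/-- Fixing the attributes of the word `p` to the listed values restricts `T`
to a subtable (possibly empty) in which all rows carry the same decision. -/
def FixConst {k : ℕ} (T : Table k) (p : List (ℕ × Fin (k + 2))) : Prop :=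
  ∀ r ∈ T.rows, ∀ r' ∈ T.rows, RuleSat p r → RuleSat p r' → T.dec r = T.dec r'

/-- `M_ψ(T, δ)`: minimum `ψ`-value of a word of attributes of `T` whose
fixation to the values of `δ` yields a subtable with constant decisions. -/
noncomputable def Mpsirow {k : ℕ} (ψ : CMeasure) (T : Table k)
    (δ : ℕ → Fin (k + 2)) : ℕ :=
  sInf {m | ∃ p : List (ℕ × Fin (k + 2)),
    (∀ q ∈ p, q.1 ∈ T.attrs ∧ q.2 = δ q.1) ∧ FixConst T p ∧
      ψ.ψ (p.map Prod.fst) = m}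

/-- `M_ψ(T)`: maximum of `M_ψ(T, δ)` over all tuples `δ ∈ E_{k+2}^{W(T)}`. -/
noncomputable def Mpsi {k : ℕ} (ψ : CMeasure) (T : Table k) : ℕ :=
  sSup {m | ∃ δ : ℕ → Fin (k + 2), (∀ a ∉ T.attrs, δ a = 0) ∧ Mpsirow ψ T δ = m}

/-- A critical table: for every column there are two rows differing exactly
in this column. -/
def Critical {k : ℕ} (T : Table k) : Prop :=
  T.rows.Nonempty ∧ ∀ a ∈ T.attrs, ∃ r ∈ T.rows, ∃ r' ∈ T.rows,
    r a ≠ r' a ∧ ∀ b : ℕ, b ≠ a → r b = r' b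

/-- `H_D(n)`: the largest element of `D` not exceeding `n` (0 if none). -/
noncomputable def HD (D : Set ℕ) (n : ℕ) : ℕ := sSup (D ∩ Set.Iic n)

end ClosedClasses

open ClosedClasses

namespace ClosedClasses

variable {k : ℕ}

/-- Leaf decision: decision of some row agreeing with `σ` on `D`, if any. -/
noncomputable def pick (T : Table k) (D : Finset ℕ) (σ : ℕ → Fin (k + 2)) : Bool :=
  if h : ∃ r ∈ T.rows, ∀ a ∈ D, r a = σ a then T.dec h.choose else false

/-- The full tree querying all attributes from the list `L`. -/
noncomputable def mkTree (d : (ℕ → Fin (k + 2)) → Bool) :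
    List ℕ → (ℕ → Fin (k + 2)) → DT k
  | [], σ => .leaf (d σ)
  | a :: L, σ => .node a fun v => mkTree d L (Function.update σ a v)

lemma mkTree_depth (d : (ℕ → Fin (k + 2)) → Bool) (L : List ℕ)
    (σ : ℕ → Fin (k + 2)) : (mkTree d L σ).depth ≤ L.length := by
  induction L generalizing σ with
  | nil => simp [mkTree, DT.depth]
  | cons a L ih =>
    simp only [mkTree, DT.depth, List.length_cons]
    have : (Finset.univ.sup fun i =>
        (mkTree d L (Function.update σ a i)).depth) ≤ L.length :=
      Finset.sup_le fun i _ => ih _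
    omega

lemma mkTree_attrSet (d : (ℕ → Fin (k + 2)) → Bool) (L : List ℕ)
    (σ : ℕ → Fin (k + 2)) : (mkTree d L σ).attrSet ⊆ L.toFinset := by
  induction L generalizing σ with
  | nil => simp [mkTree, DT.attrSet]
  | cons a L ih =>
    simp only [mkTree, DT.attrSet, List.toFinset_cons]
    apply Finset.insert_subset_insert
    exact Finset.biUnion_subset.2 fun i _ => ih _

lemma mkTree_eval (d : (ℕ → Fin (k + 2)) → Bool) (L : List ℕ)
    (σ : ℕ → Fin (k + 2)) (r : ℕ → Fin (k + 2)) :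
    (mkTree d L σ).eval r = d (fun a => if a ∈ L then r a else σ a) := by
  induction L generalizing σ with
  | nil => simp [mkTree, DT.eval]
  | cons a L ih =>
    simp only [mkTree, DT.eval, ih]
    congr 1
    funext b
    by_cases hbL : b ∈ L
    · simp [hbL]
    · by_cases hba : b = a
      · subst hba; simp [hbL, Function.update_self]
      · simp [hbL, hba, Function.update_of_ne hba]

/-- Existence of a deterministic decision tree of depth `|D|` whenever rows
agreeing on `D ⊆ attrs` have equal decisions. -/
lemma exists_dt (T : Table k) (D : Finset ℕ) (hD : D ⊆ T.attrs)
    (hsep : ∀ r ∈ T.rows, ∀ r' ∈ T.rows,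
      (∀ a ∈ D, r a = r' a) → T.dec r = T.dec r') :
    ∃ Γ : DT k, IsDT T Γ ∧ Γ.depth ≤ D.card := by
  refine ⟨mkTree (pick T D) D.toList (fun _ => 0), ⟨?_, ?_⟩, ?_⟩
  · exact (mkTree_attrSet _ _ _).trans (by
      intro a ha
      exact hD (by simpa using ha))
  · intro r hr
    rw [mkTree_eval]
    set σ : ℕ → Fin (k + 2) := fun a => if a ∈ D.toList then r a else 0 with hσ
    have hex : ∃ r₀ ∈ T.rows, ∀ a ∈ D, r₀ a = σ a :=
      ⟨r, hr, fun a ha => by simp [hσ, Finset.mem_toList, ha]⟩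
    rw [pick, dif_pos hex]
    obtain ⟨h₀, h₁⟩ := hex.choose_spec
    refine hsep _ h₀ _ hr fun a ha => ?_
    rw [h₁ a ha]
    simp [hσ, Finset.mem_toList, ha]
  · have := mkTree_depth (pick T D) D.toList (fun _ => 0)
    rwa [Finset.length_toList] at this

lemma hd_le (T : Table k) (D : Finset ℕ) (hD : D ⊆ T.attrs)
    (hsep : ∀ r ∈ T.rows, ∀ r' ∈ T.rows,
      (∀ a ∈ D, r a = r' a) → T.dec r = T.dec r') :
    hd T ≤ D.card := by
  obtain ⟨Γ, hΓ, hdep⟩ := exists_dt T D hD hsep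
  exact le_trans (Nat.sInf_le ⟨Γ, hΓ, rfl⟩) hdep

/-- The list of attributes queried along the computation path of `r`. -/
def dtPath : DT k → (ℕ → Fin (k + 2)) → List ℕ
  | .leaf _, _ => []
  | .node a ch, r => a :: dtPath (ch (r a)) r

lemma dtPath_length_le_depth (Γ : DT k) (r : ℕ → Fin (k + 2)) :
    (dtPath Γ r).length ≤ Γ.depth := by
  induction Γ with
  | leaf b => simp [dtPath, DT.depth]
  | node a ch ih =>
    simp only [dtPath, DT.depth, List.length_cons]
    have := (ih (r a)).trans (Finset.le_sup (f := fun i => (ch i).depth)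
      (Finset.mem_univ (r a)))
    omega

lemma eval_eq_of_agree (Γ : DT k) (r r' : ℕ → Fin (k + 2))
    (h : ∀ a ∈ dtPath Γ r, r' a = r a) : Γ.eval r' = Γ.eval r := by
  induction Γ with
  | leaf b => simp [DT.eval]
  | node a ch ih =>
    have ha : r' a = r a := h a (by simp [dtPath])
    simp only [DT.eval, ha]
    exact ih (r a) fun b hb => h b (by simp [dtPath, hb])

lemma sep_attrs (T : Table k) (r : ℕ → Fin (k + 2)) (hr : r ∈ T.rows) :
    T.Separates T.attrs r := by
  refine ⟨subset_rfl, fun r' hr' hne => ?_⟩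
  by_contra hcon
  push_neg at hcon
  apply hne
  funext a
  by_cases ha : a ∈ T.attrs
  · exact (hcon a ha).symm
  · rw [T.supp r hr a ha, T.supp r' hr' a ha]

lemma Srow_le_W (T : Table k) (r : ℕ → Fin (k + 2)) (hr : r ∈ T.rows) :
    T.Srow r ≤ T.W :=
  Nat.sInf_le ⟨T.attrs, sep_attrs T r hr, rfl⟩

/-- The key construction: from a table with `S(T) ≥ max n 1`, produce a table
in the closure with `n` columns whose minimum decision-tree depth is `n`. -/
lemma exists_hard_table (T : Table k) (hT : max n 1 ≤ T.S) :
    ∃ T' : Table k, InClosure T' T ∧ T'.W = n ∧ hd T' = n := by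
  classical
  -- `S T` is attained at some row
  have hSset : {m | ∃ r ∈ T.rows, T.Srow r = m}.Nonempty := by
    rcases Set.eq_empty_or_nonempty {m | ∃ r ∈ T.rows, T.Srow r = m} with he | hne
    · exfalso
      have : T.S = 0 := by rw [Table.S, he, csSup_empty]; rfl
      omega
    · exact hne
  have hbdd : BddAbove {m | ∃ r ∈ T.rows, T.Srow r = m} := by
    refine ⟨T.W, fun m hm => ?_⟩
    obtain ⟨r, hr, hrm⟩ := hm
    exact hrm ▸ Srow_le_W T r hr
  have hmem := Nat.sSup_mem hSset hbdd
  obtain ⟨r, hr, hSr'⟩ := hmem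
  have hSr : T.Srow r = T.S := hSr'
  -- a minimum-cardinality separating set `D` for `r`
  have hDset : {m | ∃ D : Finset ℕ, T.Separates D r ∧ D.card = m}.Nonempty :=
    ⟨T.W, T.attrs, sep_attrs T r hr, rfl⟩
  obtain ⟨D, hDsep, hDcard⟩ := Nat.sInf_mem hDset
  rw [← Table.Srow] at hDcard
  have hScard : D.card = T.S := by rw [hDcard, hSr]
  have hn1 : 1 ≤ D.card := by omega
  have hnD : n ≤ D.card := by omega
  -- a subset `D'` of size `n`
  obtain ⟨D', hD'sub, hD'card⟩ := Finset.exists_subset_card_eq hnD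
  have hD'attrs : D' ⊆ T.attrs := hD'sub.trans hDsep.1
  -- the table `T'`
  set ρ : ℕ → Fin (k + 2) := restrict D' r with hρ
  have hsupp : ∀ s ∈ T.rows.image (restrict D'), ∀ a ∉ D', s a = 0 := by
    intro s hs a ha
    obtain ⟨r₀, _, rfl⟩ := Finset.mem_image.1 hs
    simp [restrict, ha]
  set T' : Table k := ⟨D', T.rows.image (restrict D'),
    fun s => decide (s = ρ), hsupp⟩ with hT'
  have hρmem : ρ ∈ T'.rows := Finset.mem_image_of_mem _ hr
  -- upper bound
  have hub : hd T' ≤ n := by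
    rw [← hD'card]
    refine hd_le T' D' subset_rfl fun s hs s' hs' hagree => ?_
    obtain ⟨r₀, _, rfl⟩ := Finset.mem_image.1 hs
    obtain ⟨r₁, _, rfl⟩ := Finset.mem_image.1 hs'
    have : restrict D' r₀ = restrict D' r₁ := by
      funext a
      by_cases ha : a ∈ D'
      · exact hagree a ha
      · simp [restrict, ha]
    rw [this]
  -- lower bound
  have hlb : n ≤ hd T' := by
    obtain ⟨Γ₀, hΓ₀, _⟩ := exists_dt T' D' subset_rfl
      (fun s hs s' hs' hagree => by
        obtain ⟨r₀, _, rfl⟩ := Finset.mem_image.1 hs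
        obtain ⟨r₁, _, rfl⟩ := Finset.mem_image.1 hs'
        have : restrict D' r₀ = restrict D' r₁ := by
          funext a
          by_cases ha : a ∈ D'
          · exact hagree a ha
          · simp [restrict, ha]
        rw [this])
    refine le_csInf ⟨Γ₀.depth, Γ₀, hΓ₀, rfl⟩ ?_
    rintro m ⟨Γ, hΓ, rfl⟩
    -- every attribute of `D'` is queried on the path of `ρ`
    have hpath : ∀ a ∈ D', a ∈ dtPath Γ ρ := by
      intro a haD'
      by_contra hanot
      -- `D.erase a` does not separate `r`
      have herase : ¬ T.Separates (D.erase a) r := by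
        intro hsep'
        have := Nat.sInf_le (s := {m | ∃ D : Finset ℕ, T.Separates D r ∧ D.card = m})
          ⟨D.erase a, hsep', rfl⟩
        rw [← Table.Srow, ← hDcard] at this
        have hcard := Finset.card_erase_of_mem (hD'sub haD')
        omega
      rw [Table.Separates] at herase
      push_neg at herase
      obtain ⟨ra, hra, hrane, hraeq⟩ :=
        herase ((Finset.erase_subset a D).trans hDsep.1)
      -- `ra` differs from `r` exactly at `a` inside `D`
      have hdiffa : ra a ≠ r a := by
        obtain ⟨b, hb, hbneq⟩ := hDsep.2 ra hra hrane
        by_cases hba : b = a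
        · subst hba; exact fun h => hbneq h.symm
        · exact absurd (hraeq b (Finset.mem_erase.2 ⟨hba, hb⟩)) hbneq
      set ρa : ℕ → Fin (k + 2) := restrict D' ra with hρa
      have hρamem : ρa ∈ T'.rows := Finset.mem_image_of_mem _ hra
      have hρane : ρa ≠ ρ := by
        intro h
        apply hdiffa
        have := congrFun h a
        simpa [hρa, hρ, restrict, haD'] using this
      have hagree : ∀ b ∈ dtPath Γ ρ, ρa b = ρ b := by
        intro b hb
        have hba : b ≠ a := fun h => hanot (h ▸ hb)
        by_cases hbD' : b ∈ D'
        · have : ra b = r b :=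
            (hraeq b (Finset.mem_erase.2 ⟨hba, hD'sub hbD'⟩)).symm
          simp [hρa, hρ, restrict, hbD', this]
        · simp [hρa, hρ, restrict, hbD']
      have heval := eval_eq_of_agree Γ ρ ρa hagree
      rw [hΓ.2 ρ hρmem, hΓ.2 ρa hρamem] at heval
      simp [hT'] at heval
      exact hρane heval
    have hsub : D' ⊆ (dtPath Γ ρ).toFinset := fun a ha =>
      List.mem_toFinset.2 (hpath a ha)
    calc n = D'.card := hD'card.symm
      _ ≤ (dtPath Γ ρ).toFinset.card := Finset.card_le_card hsub
      _ ≤ (dtPath Γ ρ).length := (dtPath Γ ρ).toFinset_card_le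
      _ ≤ Γ.depth := dtPath_length_le_depth Γ ρ
  exact ⟨T', ⟨hD'attrs, by simp [hT']⟩, hD'card, le_antisymm hub hlb⟩

end ClosedClasses

/-- Theorem 2: if `S` is unbounded on a nonempty closed class
`A`, then for every `n` there is `T* ∈ A` with exactly `n` columns and
`h^d(T*) = n`, while every `T ∈ A` with `W(T) ≤ n` (or `Θ(T) ≤ n`) has
`h^d(T) ≤ n`; hence `F^W_{h,A}(n) = F^Θ_{h,A}(n) = n`. -/
theorem FW_FTheta_eq_n (k : ℕ) (A : Set (Table k)) (hA : ClosedClass A)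
    (hS : ∀ m : ℕ, ∃ T ∈ A, m ≤ T.S) :
    ∀ n : ℕ,
      (∃ T' ∈ A, T'.W = n ∧ hd T' = n) ∧
      (∀ T ∈ A, T.W ≤ n → hd T ≤ n) ∧
      (∀ T ∈ A, T.theta ≤ n → hd T ≤ n) := by
  intro n
  refine ⟨?_, ?_, ?_⟩
  · obtain ⟨T, hTA, hTS⟩ := hS (max n 1)
    obtain ⟨T', hT'cl, hW, hhd⟩ := exists_hard_table T hTS
    exact ⟨T', hA.2 T hTA T' hT'cl, hW, hhd⟩
  · intro T _ hW
    have : hd T ≤ T.attrs.card := by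
      refine hd_le T T.attrs subset_rfl fun r hr r' hr' hagree => ?_
      have : r = r' := by
        funext a
        by_cases ha : a ∈ T.attrs
        · exact hagree a ha
        · rw [T.supp r hr a ha, T.supp r' hr' a ha]
      rw [this]
    exact this.trans hW
  · intro T _ hθ
    -- `T.attrs` is a test, so the infimum defining `theta` is attained
    have htest : T.IsTest T.attrs := by
      refine ⟨subset_rfl, fun r hr r' hr' hne => ?_⟩
      have hrr' : r ≠ r' := fun h => hne (h ▸ rfl)
      by_contra hcon
      push_neg at hcon
      apply hrr'
      funext a
      by_cases ha : a ∈ T.attrs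
      · exact hcon a ha
      · rw [T.supp r hr a ha, T.supp r' hr' a ha]
    have hne : {m | ∃ D : Finset ℕ, T.IsTest D ∧ D.card = m}.Nonempty :=
      ⟨T.attrs.card, T.attrs, htest, rfl⟩
    obtain ⟨D, hDtest, hDcard⟩ := Nat.sInf_mem hne
    have : hd T ≤ D.card := by
      refine hd_le T D hDtest.1 fun r hr r' hr' hagree => ?_
      by_contra hdec
      obtain ⟨a, haD, hane⟩ := hDtest.2 r hr r' hr' hdec
      exact hane (hagree a haD)
    rw [hDcard] at this
    exact this.trans hθ
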